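/- If m ≥ 1 and A, B are attribute sets of nonzero vectors with â ≠ b̂ (means of normalized vectors), then setting x_1 = ... = x_m = â − b̂ and y_1 = ... = y_m = −(â − b̂) yields WEAT effect size d(X,Y,A,B) = 2, where the effect size is defined on the associations s(w,A,B) = cos(w, â − b̂)·‖â − b̂‖. In particular the extreme value 2 is attainable regardless of the attribute sets, so WEAT's effect size is magnitude-comparable. -/

import Mathlib

/-- Cosine similarity in `ℝ^d`. -/
noncomputable def cosSim {d : ℕ} (u v : EuclideanSpace ℝ (Fin d)) : ℝ :=
  (inner ℝ u v : ℝ) / (‖u‖ * ‖v‖)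

/-- WEAT's effect size is magnitude-comparable: for any attribute sets `A, B` of
nonzero vectors with distinct normalized means `â ≠ b̂`, taking
`x₁ = ... = xₘ = â − b̂` and `y₁ = ... = yₘ = −(â − b̂)` yields effect size `2`,
where the associations are `s(w,A,B) = cos(w, â−b̂)·‖â−b̂‖`. -/
theorem weat_effect_size_two_attainable (d m : ℕ) (hm : 1 ≤ m)
    (A B : Finset (EuclideanSpace ℝ (Fin d)))
    (hA0 : ∀ a ∈ A, a ≠ 0) (hB0 : ∀ b ∈ B, b ≠ 0)
    (ahat bhat : EuclideanSpace ℝ (Fin d))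
    (hahat : ahat = (A.card : ℝ)⁻¹ • ∑ a ∈ A, ‖a‖⁻¹ • a)
    (hbhat : bhat = (B.card : ℝ)⁻¹ • ∑ b ∈ B, ‖b‖⁻¹ • b)
    (hab : ahat ≠ bhat)
    (s : EuclideanSpace ℝ (Fin d) → ℝ)
    (hs : s = fun w => cosSim w (ahat - bhat) * ‖ahat - bhat‖)
    (X Y : Fin m → EuclideanSpace ℝ (Fin d))
    (hX : ∀ i, X i = ahat - bhat) (hY : ∀ i, Y i = -(ahat - bhat)) :
    (let μ : ℝ := (∑ i, s (X i) + ∑ i, s (Y i)) / (2 * m)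
     let σ : ℝ := Real.sqrt ((∑ i, (s (X i) - μ) ^ 2 + ∑ i, (s (Y i) - μ) ^ 2) / (2 * m))
     ((1 / (m : ℝ)) * ∑ i, s (X i) - (1 / (m : ℝ)) * ∑ i, s (Y i)) / σ = 2) := by
  set v := ahat - bhat with hv
  have hv0 : v ≠ 0 := sub_ne_zero.mpr hab
  have hnv : ‖v‖ ≠ 0 := norm_ne_zero_iff.mpr hv0
  have hnvpos : (0:ℝ) < ‖v‖ := norm_pos_iff.mpr hv0
  have hsv : s v = ‖v‖ := by
    simp only [hs, cosSim, real_inner_self_eq_norm_mul_norm]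
    field_simp
  have hsnv : s (-v) = -‖v‖ := by
    simp only [hs, cosSim, inner_neg_left, real_inner_self_eq_norm_mul_norm, norm_neg]
    field_simp
  have hsX : ∀ i, s (X i) = ‖v‖ := fun i => by rw [hX i]; exact hsv
  have hsY : ∀ i, s (Y i) = -‖v‖ := fun i => by rw [hY i]; exact hsnv
  have hSX : ∑ i, s (X i) = m * ‖v‖ := by
    simp [hsX, Finset.sum_const, nsmul_eq_mul]
  have hSY : ∑ i, s (Y i) = -(m * ‖v‖) := by
    simp [hsY, Finset.sum_const, nsmul_eq_mul]
  have hm0 : (m:ℝ) ≠ 0 := Nat.cast_ne_zero.mpr (by omega)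
  intro μ σ
  have hμ : μ = 0 := by
    simp only [μ, hSX, hSY]
    ring
  have hσ : σ = ‖v‖ := by
    simp only [σ, hμ, sub_zero, hsX, hsY, Finset.sum_const, Finset.card_univ,
      Fintype.card_fin, nsmul_eq_mul]
    have : ((m:ℝ) * ‖v‖ ^ 2 + (m:ℝ) * (-‖v‖) ^ 2) / (2 * m) = ‖v‖ ^ 2 := by
      field_simp; ring
    rw [this, Real.sqrt_sq hnvpos.le]
  rw [hσ, hSX, hSY]
  field_simp
  ring
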